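/- Let X, Y, Z be real vector spaces equipped with asymmetric norms p₁, p₂, q respectively and let T : X × Y → Z be a bilinear operator. Then the following are equivalent: (i) for every (x,y) ∈ X × Y and every sequence (xₙ,yₙ) in X × Y with p₁(xₙ − x) → 0 and p₂(yₙ − y) → 0, one has q(T(xₙ,yₙ) − T(x,y)) → 0 (sequential continuity of T with respect to the quasi-metric topologies induced by p₁ × p₂ and q); (ii) for every ε > 0 there exists r > 0 such that q(T(x,y)) ≤ ε whenever p₁(x) ≤ r and p₂(y) ≤ r (continuity of T at (0,0)); (iii) there exists β ≥ 0 such that q(T(x,y)) ≤ β·p₁(x)·p₂(y) for all (x,y) ∈ X × Y. -/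

import Mathlib

/-- An asymmetric norm on a real vector space. -/
structure IsAsymNorm {X : Type*} [AddCommGroup X] [Module ℝ X] (p : X → ℝ) : Prop where
  nonneg : ∀ x, 0 ≤ p x
  eq_zero : ∀ x, p x = 0 → p (-x) = 0 → x = 0
  smul_eq : ∀ (a : ℝ) (x : X), 0 ≤ a → p (a • x) = a * p x
  add_le : ∀ x y, p (x + y) ≤ p x + p y

/-- A bilinear operator `T : X × Y → Z`. -/
def IsBilinOp {X Y Z : Type*} [AddCommGroup X] [Module ℝ X] [AddCommGroup Y] [Module ℝ Y]
    [AddCommGroup Z] [Module ℝ Z] (T : X × Y → Z) : Prop :=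
  (∀ x x' y, T (x + x', y) = T (x, y) + T (x', y)) ∧
  (∀ (a : ℝ) (x : X) (y : Y), T (a • x, y) = a • T (x, y)) ∧
  (∀ x y y', T (x, y + y') = T (x, y) + T (x, y')) ∧
  (∀ (a : ℝ) (x : X) (y : Y), T (x, a • y) = a • T (x, y))

theorem stmt_1 {X Y Z : Type*} [AddCommGroup X] [Module ℝ X] [AddCommGroup Y] [Module ℝ Y]
    [AddCommGroup Z] [Module ℝ Z]
    (p₁ : X → ℝ) (p₂ : Y → ℝ) (q : Z → ℝ)
    (hp₁ : IsAsymNorm p₁) (hp₂ : IsAsymNorm p₂) (hq : IsAsymNorm q)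
    (T : X × Y → Z) (hT : IsBilinOp T) :
    List.TFAE
      [∀ (x : X) (y : Y) (xs : ℕ → X) (ys : ℕ → Y),
          Filter.Tendsto (fun n => p₁ (xs n - x)) Filter.atTop (nhds 0) →
          Filter.Tendsto (fun n => p₂ (ys n - y)) Filter.atTop (nhds 0) →
          Filter.Tendsto (fun n => q (T (xs n, ys n) - T (x, y))) Filter.atTop (nhds 0),
        ∀ ε > (0 : ℝ), ∃ r > (0 : ℝ), ∀ x y, p₁ x ≤ r → p₂ y ≤ r → q (T (x, y)) ≤ ε,
        ∃ β ≥ (0 : ℝ), ∀ x y, q (T (x, y)) ≤ β * p₁ x * p₂ y] := by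
  obtain ⟨hadd₁, hsmul₁, hadd₂, hsmul₂⟩ := hT
  have hT00 : T (0, 0) = 0 := by
    have := hsmul₁ 0 0 0
    simpa using this
  tfae_have 1 → 2 := by
    intro h1
    by_contra hc
    push_neg at hc
    obtain ⟨ε, hε, hc⟩ := hc
    choose xs ys hx hy hgt using fun n : ℕ =>
      hc (1 / (n + 1)) (by positivity)
    have hx0 : Filter.Tendsto (fun n => p₁ (xs n - 0)) Filter.atTop (nhds 0) := by
      apply squeeze_zero (fun n => hp₁.nonneg _) (fun n => by simpa using hx n)
      simpa using tendsto_one_div_add_atTop_nhds_zero_nat (𝕜 := ℝ)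
    have hy0 : Filter.Tendsto (fun n => p₂ (ys n - 0)) Filter.atTop (nhds 0) := by
      apply squeeze_zero (fun n => hp₂.nonneg _) (fun n => by simpa using hy n)
      simpa using tendsto_one_div_add_atTop_nhds_zero_nat (𝕜 := ℝ)
    have := h1 0 0 xs ys hx0 hy0
    rw [hT00] at this
    simp only [sub_zero] at this
    have := (this.eventually (eventually_lt_nhds hε)).exists
    obtain ⟨n, hn⟩ := this
    exact absurd (hgt n) (not_lt.mpr hn.le)
  tfae_have 2 → 3 := by
    intro h2
    obtain ⟨r, hr, hbd⟩ := h2 1 one_pos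
    refine ⟨(r * r)⁻¹, by positivity, fun x y => ?_⟩
    have key : ∀ δ > (0:ℝ), q (T (x, y)) ≤ (r * r)⁻¹ * (p₁ x + δ) * (p₂ y + δ) := by
      intro δ hδ
      have hpx := hp₁.nonneg x
      have hpy := hp₂.nonneg y
      set a := r / (p₁ x + δ) with ha
      set b := r / (p₂ y + δ) with hb
      have hap : 0 < a := by positivity
      have hbp : 0 < b := by positivity
      have h1 : p₁ (a • x) ≤ r := by
        rw [hp₁.smul_eq a x hap.le, ha, div_mul_eq_mul_div, div_le_iff₀ (by positivity)]
        nlinarith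
      have h2 : p₂ (b • y) ≤ r := by
        rw [hp₂.smul_eq b y hbp.le, hb, div_mul_eq_mul_div, div_le_iff₀ (by positivity)]
        nlinarith
      have := hbd (a • x) (b • y) h1 h2
      rw [hsmul₁, hsmul₂, smul_smul, hq.smul_eq _ _ (by positivity)] at this
      rw [ha, hb] at this
      have hrr : (0:ℝ) < r * r := by positivity
      rw [div_mul_div_comm, div_mul_eq_mul_div, div_le_one (by positivity)] at this
      rw [inv_mul_eq_div, div_mul_eq_mul_div, le_div_iff₀ hrr]
      nlinarith
    have hlim : Filter.Tendsto (fun δ : ℝ => (r * r)⁻¹ * (p₁ x + δ) * (p₂ y + δ))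
        (nhdsWithin 0 (Set.Ioi 0)) (nhds ((r * r)⁻¹ * p₁ x * p₂ y)) := by
      have : Filter.Tendsto (fun δ : ℝ => (r * r)⁻¹ * (p₁ x + δ) * (p₂ y + δ))
          (nhds 0) (nhds ((r * r)⁻¹ * (p₁ x + 0) * (p₂ y + 0))) := by
        apply Filter.Tendsto.mul
        apply Filter.Tendsto.mul tendsto_const_nhds
        · exact (continuous_const.add continuous_id).tendsto 0
        · exact (continuous_const.add continuous_id).tendsto 0
      simpa using this.mono_left nhdsWithin_le_nhds
    refine ge_of_tendsto hlim ?_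
    filter_upwards [self_mem_nhdsWithin] with δ hδ
    exact key δ hδ
  tfae_have 3 → 1 := by
    intro h3 x y xs ys hx hy
    obtain ⟨β, hβ, hbd⟩ := h3
    have hdecomp : ∀ n, T (xs n, ys n) - T (x, y) = T (xs n - x, ys n) + T (x, ys n - y) := by
      intro n
      have e1 : T (xs n - x, ys n) = T (xs n, ys n) - T (x, ys n) := by
        have : T ((xs n - x) + x, ys n) = T (xs n - x, ys n) + T (x, ys n) := hadd₁ _ _ _
        rw [sub_add_cancel] at this
        rw [this]; abel
      have e2 : T (x, ys n - y) = T (x, ys n) - T (x, y) := by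
        have : T (x, (ys n - y) + y) = T (x, ys n - y) + T (x, y) := hadd₂ _ _ _
        rw [sub_add_cancel] at this
        rw [this]; abel
      rw [e1, e2]; abel
    apply squeeze_zero (fun n => hq.nonneg _)
      (g := fun n => β * p₁ (xs n - x) * (p₂ (ys n - y) + p₂ y) + β * p₁ x * p₂ (ys n - y))
    · intro n
      rw [hdecomp n]
      calc q (T (xs n - x, ys n) + T (x, ys n - y))
          ≤ q (T (xs n - x, ys n)) + q (T (x, ys n - y)) := hq.add_le _ _
        _ ≤ β * p₁ (xs n - x) * p₂ (ys n) + β * p₁ x * p₂ (ys n - y) := by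
            exact add_le_add (hbd _ _) (hbd _ _)
        _ ≤ β * p₁ (xs n - x) * (p₂ (ys n - y) + p₂ y) + β * p₁ x * p₂ (ys n - y) := by
            gcongr
            · exact mul_nonneg hβ (hp₁.nonneg _)
            · have : p₂ (ys n) = p₂ ((ys n - y) + y) := by rw [sub_add_cancel]
              rw [this]; exact hp₂.add_le _ _
    · have : Filter.Tendsto
          (fun n => β * p₁ (xs n - x) * (p₂ (ys n - y) + p₂ y) + β * p₁ x * p₂ (ys n - y))
          Filter.atTop (nhds (β * 0 * (0 + p₂ y) + β * p₁ x * 0)) := by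
        apply Filter.Tendsto.add
        · exact ((tendsto_const_nhds.mul hx).mul (hy.add tendsto_const_nhds))
        · exact (tendsto_const_nhds.mul hy)
      simpa using this
  tfae_finish
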